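/- Let (α₀, f₀) be a minimizing pair for the finite-interval 1D functional on [0,ℓ], and suppose f₀ > 0 attains its maximum at t₀ ∈ (0,ℓ). Then 0 < t₀ ≤ |α₀| + 1/√b. -/

import Mathlib

/-- Location of the maximum of the finite-interval 1D minimizer: if `f₀ > 0` solves the
variational equation with Neumann boundary conditions and attains its maximum at
`t₀ ∈ (0, ℓ)`, then `0 < t₀ ≤ |α₀| + 1/√b`. -/
theorem max_point_bound (Θ₀ b ℓ α₀ t₀ : ℝ) (hΘ : 0 < Θ₀)
    (hb1 : 1 < b) (hb2 : b < Θ₀⁻¹) (hℓ : 0 < ℓ)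
    (f₀ : ℝ → ℝ) (hreg : ContDiff ℝ 2 f₀)
    (hode : ∀ t ∈ Set.Icc (0:ℝ) ℓ,
      -(deriv (deriv f₀) t) + (t + α₀) ^ 2 * f₀ t = (1 / b) * (1 - f₀ t ^ 2) * f₀ t)
    (hneu0 : deriv f₀ 0 = 0) (hneuℓ : deriv f₀ ℓ = 0)
    (hbounds : ∀ t ∈ Set.Icc (0:ℝ) ℓ, 0 < f₀ t ∧ f₀ t ≤ 1)
    (ht₀ : t₀ ∈ Set.Ioo (0:ℝ) ℓ)
    (hmax : IsMaxOn f₀ (Set.Icc (0:ℝ) ℓ) t₀) :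
    0 < t₀ ∧ t₀ ≤ |α₀| + 1 / Real.sqrt b := by
  obtain ⟨ht₀0, ht₀ℓ⟩ := ht₀
  have hb0 : (0:ℝ) < b := lt_trans one_pos hb1
  have hdiff : Differentiable ℝ f₀ := hreg.differentiable (by norm_num)
  have hcd1 : ContDiff ℝ 1 (deriv f₀) := by
    have h2 : ContDiff ℝ (1+1) f₀ := by
      have : ((2:ℕ):WithTop ℕ∞) = 1 + 1 := by norm_num
      exact this ▸ hreg
    exact (contDiff_succ_iff_deriv.mp h2).2.2
  have hdiff' : Differentiable ℝ (deriv f₀) := hcd1.differentiable (by norm_num)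
  have hcont'' : Continuous (deriv (deriv f₀)) := hcd1.continuous_deriv le_rfl
  -- f₀ t₀ > 0
  have ht₀mem : t₀ ∈ Set.Icc (0:ℝ) ℓ := ⟨le_of_lt ht₀0, le_of_lt ht₀ℓ⟩
  have hf₀pos : 0 < f₀ t₀ := (hbounds t₀ ht₀mem).1
  -- second derivative nonpositive at interior max
  have hloc : IsLocalMax f₀ t₀ :=
    hmax.isLocalMax (Icc_mem_nhds ht₀0 ht₀ℓ)
  have hsecond : deriv (deriv f₀) t₀ ≤ 0 := by
    by_contra h
    push_neg at h
    -- deriv (deriv f₀) > 0 on a neighborhood of t₀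
    have hopen : IsOpen {x : ℝ | 0 < deriv (deriv f₀) x} := isOpen_lt continuous_const hcont''
    obtain ⟨ε, hε, hball⟩ := Metric.mem_nhds_iff.mp (hopen.mem_nhds h)
    set δ := min ε (ℓ - t₀) with hδdef
    have hδpos : 0 < δ := lt_min hε (by linarith)
    -- deriv f₀ is strictly monotone on [t₀, t₀ + δ/2]
    have hmono' : StrictMonoOn (deriv f₀) (Set.Icc t₀ (t₀ + δ/2)) := by
      apply strictMonoOn_of_deriv_pos (convex_Icc _ _) (hdiff'.continuous.continuousOn)
      intro x hx
      rw [interior_Icc] at hx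
      apply hball
      rw [Metric.mem_ball, Real.dist_eq, abs_lt]
      have h1 : δ ≤ ε := min_le_left _ _
      constructor
      · linarith [hx.1]
      · linarith [hx.2]
    have hd0 : deriv f₀ t₀ = 0 := hloc.deriv_eq_zero
    have hderivpos : ∀ x ∈ Set.Ioc t₀ (t₀ + δ/2), 0 < deriv f₀ x := by
      intro x hx
      have := hmono' ⟨le_refl _, by linarith [hδpos]⟩ ⟨le_of_lt hx.1, hx.2⟩ hx.1
      rwa [hd0] at this
    -- hence f₀ strictly increasing past t₀
    have hmonof : StrictMonoOn f₀ (Set.Icc t₀ (t₀ + δ/2)) := by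
      apply strictMonoOn_of_deriv_pos (convex_Icc _ _) (hdiff.continuous.continuousOn)
      intro x hx
      rw [interior_Icc] at hx
      exact hderivpos x ⟨hx.1, le_of_lt hx.2⟩
    have hlt : f₀ t₀ < f₀ (t₀ + δ/2) :=
      hmonof ⟨le_refl _, by linarith⟩ ⟨by linarith, le_refl _⟩ (by linarith)
    have hmem : t₀ + δ/2 ∈ Set.Icc (0:ℝ) ℓ := by
      constructor
      · linarith
      · have : δ ≤ ℓ - t₀ := min_le_right _ _
        linarith
    exact absurd (hmax hmem) (not_le.mpr hlt)
  -- plug into the ODE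
  have hodet := hode t₀ ht₀mem
  have hkey : (t₀ + α₀) ^ 2 * f₀ t₀ ≤ (1 / b) * f₀ t₀ := by
    have h1 : (1 / b) * (1 - f₀ t₀ ^ 2) * f₀ t₀ ≤ (1 / b) * f₀ t₀ := by
      have h3 : (0:ℝ) ≤ (1 / b) * f₀ t₀ ^ 3 := by positivity
      nlinarith
    nlinarith
  have hsq : (t₀ + α₀) ^ 2 ≤ 1 / b := by
    have := mul_le_mul_of_nonneg_right (le_of_eq (rfl : (t₀+α₀)^2 = (t₀+α₀)^2)) (le_of_lt hf₀pos)
    nlinarith [hf₀pos]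
  have hsqrtb : (0:ℝ) < Real.sqrt b := Real.sqrt_pos.mpr hb0
  have habs : |t₀ + α₀| ≤ 1 / Real.sqrt b := by
    apply abs_le_of_sq_le_sq _ (by positivity)
    rw [div_pow, one_pow, Real.sq_sqrt (le_of_lt hb0)]
    exact hsq
  have := (abs_le.mp habs).2
  refine ⟨ht₀0, ?_⟩
  have : t₀ ≤ 1 / Real.sqrt b - α₀ := by linarith
  have hα : -α₀ ≤ |α₀| := by rw [← abs_neg]; exact le_abs_self _
  linarith
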